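/- Let T > 0 and let φ₁,…,φ_N : [0,T) → ℝ be nondecreasing differentiable functions with p₀·(T/(T-t))² ≤ φᵢ(t) ≤ p₂(T/(T-t)) for p₀ > 0 and a polynomial p₂ with nonnegative coefficients. Let A be the N×N matrix with diagonal entries -aᵢ < 0 and off-diagonal entries bᵢⱼ > 0, and suppose there is a row vector q with strictly positive entries and δ > 0 such that q·A ≤ -δ·q entrywise. If V₁,…,V_N : [0,T) → [0,∞) are differentiable with Vᵢ' ≤ φᵢ·(-aᵢVᵢ + Σ_{j≠i} bᵢⱼVⱼ), then Vᵢ(t) ≤ (φᵢ(t)/qᵢ)·V̄(0)·exp(-δ·∫₀ᵗ min_j φⱼ(s) ds) where V̄(0) = Σⱼ qⱼVⱼ(0)/φⱼ(0), and consequently each Vᵢ(t) → 0 as t → T⁻. -/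

import Mathlib

open Filter Set Matrix

theorem stmt17 (T p₀ δ : ℝ) (hT : 0 < T) (hp₀ : 0 < p₀) (hδ : 0 < δ)
    (n : ℕ) (hn : 0 < n)
    (a : Fin n → ℝ) (b : Fin n → Fin n → ℝ)
    (ha : ∀ i, 0 < a i) (hb : ∀ i j, i ≠ j → 0 < b i j)
    (A : Matrix (Fin n) (Fin n) ℝ)
    (hA : A = Matrix.of fun i j => if i = j then -a i else b i j)
    (q : Fin n → ℝ) (hq : ∀ i, 0 < q i)
    (hqA : ∀ j, (q ᵥ* A) j ≤ -δ * q j)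
    (φ : Fin n → ℝ → ℝ) (φ' : Fin n → ℝ → ℝ)
    (p₂ : Polynomial ℝ) (hp₂ : ∀ m, 0 ≤ p₂.coeff m)
    (hφd : ∀ i, ∀ t ∈ Set.Ico 0 T, HasDerivAt (φ i) (φ' i t) t)
    (hφmono : ∀ i, MonotoneOn (φ i) (Set.Ico 0 T))
    (hφbd : ∀ i, ∀ t ∈ Set.Ico 0 T,
      p₀ * (T / (T - t)) ^ 2 ≤ φ i t ∧ φ i t ≤ p₂.eval (T / (T - t)))
    (V V' : Fin n → ℝ → ℝ)
    (hVnn : ∀ i, ∀ t ∈ Set.Ico 0 T, 0 ≤ V i t)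
    (hderiv : ∀ i, ∀ t ∈ Set.Ico 0 T, HasDerivAt (V i) (V' i t) t)
    (hineq : ∀ i, ∀ t ∈ Set.Ico 0 T,
      V' i t ≤ φ i t * (-a i * V i t + ∑ j, if j = i then 0 else b i j * V j t)) :
    (∀ i, ∀ t ∈ Set.Ico 0 T,
      V i t ≤ (φ i t / q i) * (∑ j, q j * V j 0 / φ j 0) *
        Real.exp (-δ * ∫ s in (0:ℝ)..t, ⨅ j, φ j s)) ∧
    ∀ i, Tendsto (V i) (nhdsWithin T (Set.Iio T)) (nhds 0) := by
  classical
  have hne : Nonempty (Fin n) := Fin.pos_iff_nonempty.mp hn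
  have h0mem : (0:ℝ) ∈ Set.Ico 0 T := ⟨le_refl 0, hT⟩
  have hmax : ∀ s : ℝ, s < T → max 0 s ∈ Set.Ico 0 T :=
    fun s hs => ⟨le_max_left _ _, max_lt hT hs⟩
  have hφpos : ∀ i, ∀ t ∈ Set.Ico 0 T, 0 < φ i t := by
    intro i t ht
    have h1 : 0 < T / (T - t) := div_pos hT (by linarith [ht.2])
    exact lt_of_lt_of_le (mul_pos hp₀ (pow_pos h1 2)) (hφbd i t ht).1
  set W : ℝ → ℝ := fun t => ∑ j, q j * V j t / φ j t with hWdef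
  set h : ℝ → ℝ := fun s => ⨅ j, φ j (max 0 s) with hhdef
  have hrep : h = fun s => Finset.univ.inf' Finset.univ_nonempty fun j => φ j (max 0 s) := by
    funext s; exact (Finset.inf'_univ_eq_ciInf _).symm
  have hcontAt : ∀ s : ℝ, s < T → ContinuousAt h s := by
    intro s hs
    rw [hrep]
    exact ContinuousAt.finset_inf'_apply _ fun j _ =>
      ((hφd j _ (hmax s hs)).continuousAt.comp ((continuous_const.max continuous_id).continuousAt))
  have hconth : ContinuousOn h (Set.Iio T) := fun x hx => (hcontAt x hx).continuousWithinAt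
  have hint : ∀ t ∈ Set.Ico 0 T, IntervalIntegrable h MeasureTheory.volume 0 t := by
    intro t ht
    apply (hconth.mono ?_).intervalIntegrable
    intro x hx
    rw [Set.uIcc_of_le ht.1] at hx
    exact lt_of_le_of_lt hx.2 ht.2
  set g : ℝ → ℝ := fun t => ∫ s in (0:ℝ)..t, h s with hgdef
  have hg : ∀ t ∈ Set.Ico 0 T, HasDerivAt g (h t) t := by
    intro t ht
    exact intervalIntegral.integral_hasDerivAt_right (hint t ht)
      ⟨Set.Iio T, Iio_mem_nhds ht.2, hconth.aestronglyMeasurable measurableSet_Iio⟩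
      (hcontAt t ht.2)
  have hh_le : ∀ i, ∀ t ∈ Set.Ico 0 T, h t ≤ φ i t := by
    intro i t ht
    have : h t ≤ φ i (max 0 t) :=
      ciInf_le (Set.Finite.bddBelow (Set.finite_range _)) i
    rwa [max_eq_right ht.1] at this
  have hφ'nn : ∀ i, ∀ t ∈ Set.Ico 0 T, 0 ≤ φ' i t := by
    intro i t ht
    have hd := (hφd i t ht).hasDerivWithinAt (s := Set.Ioi t)
    rw [hasDerivWithinAt_iff_tendsto_slope] at hd
    have hIoi : Set.Ioi t \ {t} = Set.Ioi t := by
      ext x; simp (config := {contextual := true}) [lt_irrefl, ne_of_gt, LT.lt.ne']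
    rw [hIoi] at hd
    refine ge_of_tendsto hd ?_
    filter_upwards [Ioo_mem_nhdsGT_of_mem (⟨le_refl t, ht.2⟩ : t ∈ Set.Ico t T)] with y hy
    rw [slope_def_field]
    have hymem : y ∈ Set.Ico 0 T := ⟨le_trans ht.1 hy.1.le, hy.2⟩
    have := hφmono i ht hymem hy.1.le
    have hy' : 0 < y - t := by linarith [hy.1]
    exact div_nonneg (by linarith) hy'.le
  set Wd : ℝ → ℝ := fun t => ∑ i, (q i * V' i t * φ i t - q i * V i t * φ' i t) / φ i t ^ 2
    with hWddef
  have hWd : ∀ t ∈ Set.Ico 0 T, HasDerivAt W (Wd t) t := by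
    intro t ht
    exact HasDerivAt.fun_sum fun i _ =>
      ((hderiv i t ht).const_mul (q i)).div (hφd i t ht) (hφpos i t ht).ne'
  set E : ℝ → ℝ := fun t => Real.exp (δ * g t) with hEdef
  set F : ℝ → ℝ := fun t => W t * E t with hFdef
  have hE : ∀ t ∈ Set.Ico 0 T, HasDerivAt E (E t * (δ * h t)) t :=
    fun t ht => ((hg t ht).const_mul δ).exp
  have hFder : ∀ t ∈ Set.Ico 0 T,
      HasDerivAt F (Wd t * E t + W t * (E t * (δ * h t))) t :=
    fun t ht => (hWd t ht).mul (hE t ht)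
  -- the key inequality on the derivative
  have hkey : ∀ t ∈ Set.Ico 0 T, Wd t * E t + W t * (E t * (δ * h t)) ≤ 0 := by
    intro t ht
    have hE0 : 0 < E t := Real.exp_pos _
    have hs : Wd t + W t * (δ * h t) ≤ 0 := by
      set rowS : Fin n → ℝ :=
        fun i => -a i * V i t + ∑ j, if j = i then 0 else b i j * V j t with hrowSdef
      have hWd_le : Wd t ≤ ∑ i, q i * rowS i := by
        apply Finset.sum_le_sum
        intro i _
        have φpos := hφpos i t ht
        have h1 : 0 ≤ q i * V i t * φ' i t :=
          mul_nonneg (mul_nonneg (hq i).le (hVnn i t ht)) (hφ'nn i t ht)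
        have h2 : V' i t ≤ φ i t * rowS i := hineq i t ht
        rw [div_le_iff₀ (by positivity : (0:ℝ) < φ i t ^ 2)]
        nlinarith [mul_le_mul_of_nonneg_left h2 (mul_nonneg (hq i).le φpos.le)]
      have hrow : ∀ i, rowS i = ∑ j, A i j * V j t := by
        intro i
        subst hA
        have : ∀ j, (Matrix.of fun i j => if i = j then -a i else b i j) i j * V j t
            = (if j = i then -a i * V i t else 0) + (if j = i then 0 else b i j * V j t) := by
          intro j
          by_cases hj : j = i
          · subst hj; simp
          · simp [hj, show i ≠ j from fun h' => hj h'.symm]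
        rw [Finset.sum_congr rfl fun j _ => this j, Finset.sum_add_distrib,
          Finset.sum_ite_eq' Finset.univ i (fun _ => -a i * V i t)]
        simp [hrowSdef]
      have hsum_le : ∑ i, q i * rowS i ≤ ∑ j, -δ * q j * V j t := by
        calc ∑ i, q i * rowS i = ∑ i, ∑ j, q i * (A i j * V j t) := by
              refine Finset.sum_congr rfl fun i _ => ?_
              rw [hrow i, Finset.mul_sum]
          _ = ∑ j, ∑ i, q i * (A i j * V j t) := Finset.sum_comm
          _ = ∑ j, (q ᵥ* A) j * V j t := by
              refine Finset.sum_congr rfl fun j _ => ?_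
              simp [Matrix.vecMul, dotProduct, Finset.sum_mul, mul_assoc]
          _ ≤ ∑ j, -δ * q j * V j t :=
              Finset.sum_le_sum fun j _ =>
                mul_le_mul_of_nonneg_right (hqA j) (hVnn j t ht)
      have hWh : W t * (δ * h t) ≤ ∑ j, δ * q j * V j t := by
        rw [hWdef]
        simp only [Finset.sum_mul]
        apply Finset.sum_le_sum
        intro j _
        have φpos := hφpos j t ht
        have hVφ : 0 ≤ V j t / φ j t := div_nonneg (hVnn j t ht) φpos.le
        have h1 : V j t / φ j t * h t ≤ V j t / φ j t * φ j t :=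
          mul_le_mul_of_nonneg_left (hh_le j t ht) hVφ
        have h2 : V j t / φ j t * φ j t = V j t := div_mul_cancel₀ _ φpos.ne'
        have h3 : V j t / φ j t * h t ≤ V j t := le_trans h1 (le_of_eq h2)
        have h4 : δ * q j * (V j t / φ j t * h t) ≤ δ * q j * V j t :=
          mul_le_mul_of_nonneg_left h3 (mul_nonneg hδ.le (hq j).le)
        calc q j * V j t / φ j t * (δ * h t)
            = δ * q j * (V j t / φ j t * h t) := by ring
          _ ≤ δ * q j * V j t := h4
      have hzero : (∑ j, -δ * q j * V j t) + ∑ j, δ * q j * V j t = 0 := by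
        rw [← Finset.sum_add_distrib]
        exact Finset.sum_eq_zero fun j _ => by ring
      linarith
    have := mul_le_mul_of_nonneg_right hs hE0.le
    calc Wd t * E t + W t * (E t * (δ * h t))
        = (Wd t + W t * (δ * h t)) * E t := by ring
      _ ≤ 0 * E t := mul_le_mul_of_nonneg_right hs hE0.le
      _ = 0 := zero_mul _
  have hmemIco : ∀ x ∈ interior (Set.Ico (0:ℝ) T), x ∈ Set.Ico 0 T := by
    intro x hx
    rw [interior_Ico] at hx
    exact ⟨hx.1.le, hx.2⟩
  have hFanti : AntitoneOn F (Set.Ico 0 T) := by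
    apply antitoneOn_of_deriv_nonpos (convex_Ico 0 T)
    · exact fun x hx => (hFder x hx).continuousAt.continuousWithinAt
    · exact fun x hx => (hFder x (hmemIco x hx)).differentiableAt.differentiableWithinAt
    · intro x hx
      rw [(hFder x (hmemIco x hx)).deriv]
      exact hkey x (hmemIco x hx)
  have hg0 : g 0 = 0 := intervalIntegral.integral_same
  have hF0 : F 0 = W 0 := by simp [hFdef, hEdef, hg0]
  -- the main estimate
  have main1 : ∀ i, ∀ t ∈ Set.Ico 0 T,
      V i t ≤ φ i t / q i * W 0 * Real.exp (-(δ * g t)) := by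
    intro i t ht
    have hE0 : 0 < E t := Real.exp_pos _
    have h1 : q i * V i t / φ i t ≤ W t :=
      Finset.single_le_sum
        (f := fun j => q j * V j t / φ j t)
        (fun j _ => div_nonneg (mul_nonneg (hq j).le (hVnn j t ht)) (hφpos j t ht).le)
        (Finset.mem_univ i)
    have h2 : W t * E t ≤ W 0 := by
      have := hFanti h0mem ht ht.1
      rwa [hF0] at this
    have h3 : W t ≤ W 0 * Real.exp (-(δ * g t)) := by
      rw [Real.exp_neg]
      rw [← le_div_iff₀ hE0] at h2
      rwa [div_eq_mul_inv] at h2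
    have h4 : q i * V i t / φ i t ≤ W 0 * Real.exp (-(δ * g t)) := le_trans h1 h3
    have φpos := hφpos i t ht
    rw [div_le_iff₀ φpos] at h4
    have h5 : V i t ≤ W 0 * Real.exp (-(δ * g t)) * φ i t / q i := by
      rw [le_div_iff₀ (hq i)]; linarith [h4]
    calc V i t ≤ W 0 * Real.exp (-(δ * g t)) * φ i t / q i := h5
      _ = φ i t / q i * W 0 * Real.exp (-(δ * g t)) := by ring
  have hgint : ∀ t ∈ Set.Ico 0 T, (∫ s in (0:ℝ)..t, ⨅ j, φ j s) = g t := by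
    intro t ht
    apply intervalIntegral.integral_congr
    intro s hs
    rw [Set.uIcc_of_le ht.1] at hs
    simp only [hhdef, max_eq_right hs.1]
  constructor
  · intro i t ht
    have := main1 i t ht
    rw [hgint t ht, neg_mul]
    exact this
  · intro i
    -- define the bounding function of u = T/(T-t)
    set cδ : ℝ := δ * (p₀ * T) with hcδdef
    have hcδ : 0 < cδ := by positivity
    set Bf : ℝ → ℝ :=
      fun u => p₂.eval u / q i * W 0 * Real.exp (-(δ * (p₀ * (T * (u - 1))))) with hBfdef
    have hW0nn : 0 ≤ W 0 :=
      Finset.sum_nonneg fun j _ =>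
        div_nonneg (mul_nonneg (hq j).le (hVnn j 0 h0mem)) (hφpos j 0 h0mem).le
    have hbound : ∀ t ∈ Set.Ico 0 T, V i t ≤ Bf (T / (T - t)) := by
      intro t ht
      have hTt : 0 < T - t := by linarith [ht.2]
      have φpos := hφpos i t ht
      have hφub : φ i t ≤ p₂.eval (T / (T - t)) := (hφbd i t ht).2
      -- lower bound for g t
      have hlow : ∀ s ∈ Set.uIcc (0:ℝ) t, (T - s) ≠ 0 := by
        intro s hs
        rw [Set.uIcc_of_le ht.1] at hs
        have : s < T := lt_of_le_of_lt hs.2 ht.2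
        exact sub_ne_zero.mpr this.ne'
      have hcontlow : ContinuousOn (fun s => p₀ * (T / (T - s)) ^ 2) (Set.uIcc 0 t) := by
        apply ContinuousOn.mul continuousOn_const
        apply ContinuousOn.pow
        exact ContinuousOn.div continuousOn_const
          ((continuous_const.sub continuous_id).continuousOn) hlow
      have hintlow : IntervalIntegrable (fun s => p₀ * (T / (T - s)) ^ 2)
          MeasureTheory.volume 0 t := hcontlow.intervalIntegrable
      have hmono : (∫ s in (0:ℝ)..t, p₀ * (T / (T - s)) ^ 2) ≤ g t := by
        apply intervalIntegral.integral_mono_on ht.1 hintlow (hint t ht)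
        intro s hs
        have hsmem : s ∈ Set.Ico 0 T := ⟨hs.1, lt_of_le_of_lt hs.2 ht.2⟩
        refine le_ciInf fun j => ?_
        rw [max_eq_right hs.1]
        exact (hφbd j s hsmem).1
      have hcalc : (∫ s in (0:ℝ)..t, p₀ * (T / (T - s)) ^ 2)
          = p₀ * T ^ 2 * (T - t)⁻¹ - p₀ * T ^ 2 * (T - 0)⁻¹ := by
        apply intervalIntegral.integral_eq_sub_of_hasDerivAt
        · intro s hs
          have hTs : T - s ≠ 0 := hlow s hs
          have h1 : HasDerivAt (fun x : ℝ => T - x) (-1) s := by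
            simpa using (hasDerivAt_id s).const_sub T
          have h2 := h1.inv hTs
          have h3 := h2.const_mul (p₀ * T ^ 2)
          convert h3 using 1
          · rfl
          · rfl
          · rw [neg_neg, one_div, div_pow, div_eq_mul_inv, mul_assoc]
        · exact hintlow
      have hglb : p₀ * (T * (T / (T - t) - 1)) ≤ g t := by
        have heq : p₀ * (T * (T / (T - t) - 1))
            = p₀ * T ^ 2 * (T - t)⁻¹ - p₀ * T ^ 2 * (T - 0)⁻¹ := by
          field_simp [hT.ne']
          all_goals ring
        rw [heq, ← hcalc]
        exact hmono
      have hexp : Real.exp (-(δ * g t))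
          ≤ Real.exp (-(δ * (p₀ * (T * (T / (T - t) - 1))))) := by
        apply Real.exp_le_exp.mpr
        have := mul_le_mul_of_nonneg_left hglb hδ.le
        linarith
      calc V i t ≤ φ i t / q i * W 0 * Real.exp (-(δ * g t)) := main1 i t ht
        _ ≤ p₂.eval (T / (T - t)) / q i * W 0
              * Real.exp (-(δ * (p₀ * (T * (T / (T - t) - 1))))) := by
            apply mul_le_mul _ hexp (Real.exp_pos _).le
            · apply mul_nonneg _ hW0nn
              exact div_nonneg (le_trans φpos.le hφub) (hq i).le
            · apply mul_le_mul_of_nonneg_right _ hW0nn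
              exact (div_le_div_iff_of_pos_right (hq i)).mpr hφub
        _ = Bf (T / (T - t)) := by rw [hBfdef]
    -- Bf tends to 0 at infinity
    have hBlim : Tendsto Bf atTop (nhds 0) := by
      set P : Polynomial ℝ := p₂.comp (Polynomial.C cδ⁻¹ * Polynomial.X) with hPdef
      have hP : Tendsto (fun x => P.eval x / Real.exp x) atTop (nhds 0) :=
        Polynomial.tendsto_div_exp_atTop P
      have hmulat : Tendsto (fun u : ℝ => cδ * u) atTop atTop :=
        Tendsto.const_mul_atTop hcδ tendsto_id
      have hcomp : Tendsto (fun u => P.eval (cδ * u) / Real.exp (cδ * u)) atTop (nhds 0) :=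
        hP.comp hmulat
      have hPeval : ∀ u : ℝ, P.eval (cδ * u) = p₂.eval u := by
        intro u
        rw [hPdef]
        simp [Polynomial.eval_comp, inv_mul_cancel_left₀ hcδ.ne']
      have hcomp2 : Tendsto (fun u => p₂.eval u / Real.exp (cδ * u)) atTop (nhds 0) :=
        hcomp.congr fun u => by rw [hPeval u]
      have hfinal := hcomp2.const_mul (W 0 / q i * Real.exp cδ)
      rw [mul_zero] at hfinal
      apply hfinal.congr
      intro u
      have h9 : -(δ * (p₀ * (T * (u - 1)))) = cδ - cδ * u := by rw [hcδdef]; ring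
      show W 0 / q i * Real.exp cδ * (p₂.eval u / Real.exp (cδ * u))
        = p₂.eval u / q i * W 0 * Real.exp (-(δ * (p₀ * (T * (u - 1)))))
      rw [h9, Real.exp_sub]
      have hne9 := (Real.exp_pos (cδ * u)).ne'
      field_simp
      all_goals ring
    have hu : Tendsto (fun t => T / (T - t)) (nhdsWithin T (Set.Iio T)) atTop := by
      have h1 : Tendsto (fun t : ℝ => T - t) (nhdsWithin T (Set.Iio T))
          (nhdsWithin 0 (Set.Ioi 0)) := by
        rw [tendsto_nhdsWithin_iff]
        constructor
        · have : Tendsto (fun t : ℝ => T - t) (nhds T) (nhds (T - T)) :=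
            (continuous_const.sub continuous_id).tendsto T
          rw [sub_self] at this
          exact this.mono_left nhdsWithin_le_nhds
        · filter_upwards [self_mem_nhdsWithin] with t ht
          exact Set.mem_Ioi.mpr (sub_pos.mpr (Set.mem_Iio.mp ht))
      have h2 : Tendsto (fun t : ℝ => (T - t)⁻¹) (nhdsWithin T (Set.Iio T)) atTop :=
        tendsto_inv_nhdsGT_zero.comp h1
      have h3 := Tendsto.const_mul_atTop hT h2
      apply h3.congr
      intro t
      rw [div_eq_mul_inv]
    have hup : Tendsto (fun t => Bf (T / (T - t))) (nhdsWithin T (Set.Iio T)) (nhds 0) :=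
      hBlim.comp hu
    have hIcomem : Set.Ico 0 T ∈ nhdsWithin T (Set.Iio T) :=
      Ico_mem_nhdsLT_of_mem ⟨hT, le_refl T⟩
    apply squeeze_zero' _ _ hup
    · filter_upwards [hIcomem] with t ht using hVnn i t ht
    · filter_upwards [hIcomem] with t ht using hbound t ht
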